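/- Let cs be a Coxeter system for a group W with simple reflections sᵢ indexed by B and length function ℓ, and let u, v ∈ W with ℓ(v) = ℓ(u) + 1. If every left inversion of u is a left inversion of v, then there exists i ∈ B such that v = u·sᵢ. -/

import Mathlib

namespace CoxAux

open CoxeterSystem List

open scoped Classical

noncomputable section

variable {B W : Type*} [Group W] {M : CoxeterMatrix B} (cs : CoxeterSystem M W)

local prefix:100 "σ" => cs.simple
local prefix:100 "π" => cs.wordProd
local prefix:100 "ℓ" => cs.length
local prefix:100 "ris" => cs.rightInvSeq

/-- Bourbaki's reflection representation on `W × Bool` (here on all of `W × Bool`). -/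
def sig (i : B) : Equiv.Perm (W × Bool) :=
  Function.Involutive.toPerm
    (fun p => (σ i * p.1 * σ i, if p.1 = σ i then !p.2 else p.2))
    (by
      rintro ⟨t, b⟩
      have h2 : (σ i * t * σ i = σ i) ↔ (t = σ i) := by
        constructor
        · intro h
          have := congrArg (fun x => σ i * x * σ i) h
          simpa [mul_assoc, cs.simple_mul_simple_cancel_left,
            cs.simple_mul_simple_cancel_right] using this
        · rintro rfl; simp [cs.simple_mul_simple_cancel_right]
      by_cases h : t = σ i
      · simp [h, h2, cs.simple_mul_simple_cancel_right]
      · have h3 : ¬ (σ i * t * σ i = σ i) := fun hh => h (h2.mp hh)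
        simp only [Prod.mk.injEq, if_neg h, if_neg h3]
        refine ⟨?_, trivial⟩
        simp [mul_assoc, cs.simple_mul_simple_cancel_left,
          cs.simple_mul_simple_cancel_right])

theorem sig_apply (i : B) (t : W) (b : Bool) :
    sig cs i (t, b) = (σ i * t * σ i, if t = σ i then !b else b) := rfl

theorem prod_map_sig (ω : List B) (t : W) (b : Bool) :
    ((ω.map (sig cs)).prod) (t, b) =
      (π ω * t * (π ω)⁻¹, Bool.xor (Nat.bodd ((ris ω).count t)) b) := by
  induction ω generalizing b with
  | nil => simp
  | cons i ω ih =>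
      have hris : ris (i :: ω) = ((π ω)⁻¹ * σ i * π ω) :: ris ω := rfl
      rw [List.map_cons, List.prod_cons, Equiv.Perm.mul_apply, ih, hris, sig_apply,
        cs.wordProd_cons]
      have hcond : (π ω * t * (π ω)⁻¹ = σ i) ↔ t = (π ω)⁻¹ * σ i * π ω := by
        constructor
        · intro h
          have := congrArg (fun x => (π ω)⁻¹ * x * π ω) h
          simpa [mul_assoc] using this
        · rintro rfl; group
      refine Prod.ext ?_ ?_
      · simp [mul_assoc, mul_inv_rev, cs.inv_simple]
      · simp only [List.count_cons, hcond]
        by_cases h : t = (π ω)⁻¹ * σ i * π ω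
        · have : ((π ω)⁻¹ * σ i * π ω == t) = true := by simp [h]
          simp only [if_pos h, this, Nat.bodd_add]
          cases Nat.bodd ((ris ω).count t) <;> cases b <;> rfl
        · have : ((π ω)⁻¹ * σ i * π ω == t) = false := by
            simp [beq_eq_false_iff_ne]; exact fun hh => h hh.symm
          simp [if_neg h, this]


theorem alt_map_prod (i j : B) (m : ℕ) :
    (((alternatingWord i j (2 * m)).map (sig cs)).prod) = (sig cs i * sig cs j) ^ m := by
  induction m with
  | zero => simp [alternatingWord]
  | succ m ih =>
      have h : alternatingWord i j (2 * (m + 1)) = i :: j :: alternatingWord i j (2 * m) := by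
        have h1 : 2 * (m + 1) = (2 * m + 1) + 1 := by ring
        rw [h1, alternatingWord_succ', alternatingWord_succ']
        simp [Nat.even_add_one, Nat.not_even_iff_odd, parity_simps]
      rw [h, List.map_cons, List.map_cons, List.prod_cons, List.prod_cons, ih,
        ← mul_assoc, pow_succ']

theorem semiconj_pow (i j : B) (a : ℕ) :
    σ j * (σ i * σ j) ^ a = (σ j * σ i) ^ a * σ j := by
  have h : SemiconjBy (σ j) (σ i * σ j) (σ j * σ i) := by
    unfold SemiconjBy; group
  exact (h.pow_right a).eq

theorem q_formula (i j : B) (k : ℕ) :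
    (π (alternatingWord i j k))⁻¹ * σ (if Even k then j else i) * π (alternatingWord i j k)
      = (σ j * σ i) ^ k * σ j := by
  have hπ := cs.prod_alternatingWord_eq_mul_pow i j k
  rcases Nat.even_or_odd k with he | ho
  · obtain ⟨a, rfl⟩ : ∃ a, k = 2 * a := ⟨k / 2, (Nat.two_mul_div_two_of_even he).symm⟩
    rw [if_pos he] at *
    rw [Nat.mul_div_cancel_left a (by norm_num)] at hπ
    rw [hπ]
    have hinv : ((1 : W) * (σ i * σ j) ^ a)⁻¹ = (σ j * σ i) ^ a := by
      rw [one_mul, ← inv_pow, mul_inv_rev, cs.inv_simple, cs.inv_simple]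
    rw [hinv, one_mul, mul_assoc, semiconj_pow, ← mul_assoc, ← pow_add, two_mul]
  · obtain ⟨a, rfl⟩ : ∃ a, k = 2 * a + 1 := by
      obtain ⟨a, ha⟩ := ho; exact ⟨a, by omega⟩
    have hne : ¬ Even (2 * a + 1) := by simp [parity_simps]
    rw [if_neg hne] at *
    have hdiv : (2 * a + 1) / 2 = a := by omega
    rw [hdiv] at hπ
    rw [hπ]
    have hinv : (σ j * (σ i * σ j) ^ a)⁻¹ = (σ j * σ i) ^ a * σ j := by
      rw [mul_inv_rev, cs.inv_simple, ← inv_pow, mul_inv_rev, cs.inv_simple, cs.inv_simple]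
    rw [hinv]
    have expand : (σ j * σ i) ^ (2 * a + 1) * σ j
        = (σ j * σ i) ^ a * ((σ j * σ i) * ((σ j * σ i) ^ a * σ j)) := by
      simp only [← mul_assoc]
      rw [mul_assoc ((σ j * σ i) ^ a), ← pow_succ, ← pow_add]
      have : a + 1 + a = 2 * a + 1 := by omega
      rw [this]
    rw [expand, mul_assoc, semiconj_pow]
    simp only [mul_assoc]

theorem ris_alt (i j : B) (k : ℕ) :
    ris (alternatingWord i j k)
      = ((List.range k).reverse).map (fun n => (σ j * σ i) ^ n * σ j) := by
  induction k with
  | zero => simp [alternatingWord]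
  | succ k ih =>
      rw [alternatingWord_succ']
      have hcons : ris ((if Even k then j else i) :: alternatingWord i j k)
          = ((π (alternatingWord i j k))⁻¹ * σ (if Even k then j else i)
              * π (alternatingWord i j k)) :: ris (alternatingWord i j k) := rfl
      rw [hcons, q_formula, ih, List.range_succ, List.reverse_append]
      simp

theorem count_ris_alt_even (i j : B) (t : W) :
    Nat.bodd (((ris (alternatingWord i j (2 * M i j))).count t)) = false := by
  have hperm : (ris (alternatingWord i j (2 * M i j))).count t
      = (((List.range (2 * M i j)).map (fun n => (σ j * σ i) ^ n * σ j)).count t) := by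
    rw [ris_alt]
    exact ((List.reverse_perm _).map _).count_eq t
  have h2 : 2 * M i j = M i j + M i j := two_mul _
  rw [hperm, h2, List.range_add, List.map_append, List.count_append, List.map_map]
  have hf : ((fun n => (σ j * σ i) ^ n * σ j) ∘ (fun k => M i j + k))
      = (fun n => (σ j * σ i) ^ n * σ j) := by
    funext n
    simp only [Function.comp_apply]
    rw [pow_add, cs.simple_mul_simple_pow', one_mul]
  rw [hf, Nat.bodd_add, Bool.xor_self]

theorem isLiftable : M.IsLiftable (sig cs) := by
  intro i j
  apply Equiv.ext
  rintro ⟨t, b⟩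
  rw [← alt_map_prod cs i j (M i j), prod_map_sig]
  have hπ1 : π (alternatingWord i j (2 * M i j)) = 1 := by
    rw [cs.prod_alternatingWord_eq_mul_pow,
      if_pos (even_two_mul _), Nat.mul_div_cancel_left _ (by norm_num), one_mul,
      cs.simple_mul_simple_pow]
  rw [hπ1, count_ris_alt_even]
  simp

def psi : W →* Equiv.Perm (W × Bool) := cs.lift ⟨sig cs, isLiftable cs⟩

theorem psi_simple (i : B) : psi cs (σ i) = sig cs i :=
  cs.lift_apply_simple (isLiftable cs) i

theorem psi_wordProd (ω : List B) : psi cs (π ω) = ((ω.map (sig cs)).prod) := by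
  rw [CoxeterSystem.wordProd, map_list_prod, List.map_map]
  congr 1
  apply List.map_congr_left
  intro i _
  exact psi_simple cs i

/-- The sign of `t` relative to `w` : `true` iff `t` occurs an odd number of times in the
right inversion sequence of any word for `w`. -/
def nn (w t : W) : Bool := ((psi cs w) (t, false)).2

theorem nn_wordProd (ω : List B) (t : W) :
    nn cs (π ω) t = Nat.bodd ((ris ω).count t) := by
  simp [nn, psi_wordProd, prod_map_sig]

theorem psi_apply (w t : W) (b : Bool) :
    psi cs w (t, b) = (w * t * w⁻¹, Bool.xor (nn cs w t) b) := by
  obtain ⟨ω, rfl⟩ := cs.wordProd_surjective w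
  rw [psi_wordProd, prod_map_sig, nn_wordProd]

theorem nn_mul (u v t : W) :
    nn cs (u * v) t = Bool.xor (nn cs u (v * t * v⁻¹)) (nn cs v t) := by
  have h : (psi cs (u * v)) (t, false) = psi cs u (psi cs v (t, false)) := by
    rw [map_mul]; rfl
  rw [psi_apply, psi_apply, psi_apply] at h
  have := congrArg Prod.snd h
  simpa using this

theorem nn_one (t : W) : nn cs 1 t = false := by
  simp [nn]

theorem nn_simple (i : B) (t : W) :
    nn cs (σ i) t = if t = σ i then true else false := by
  rw [nn, psi_simple, sig_apply]
  by_cases h : t = σ i <;> simp [h]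

theorem nn_inv (w t : W) : nn cs w⁻¹ (w * t * w⁻¹) = nn cs w t := by
  have h : Bool.xor (nn cs w⁻¹ (w * t * w⁻¹)) (nn cs w t) = false := by
    rw [← nn_mul, inv_mul_cancel, nn_one]
  cases h1 : nn cs w⁻¹ (w * t * w⁻¹) <;> cases h2 : nn cs w t <;> simp_all

theorem nn_refl_self {t : W} (ht : cs.IsReflection t) : nn cs t t = true := by
  obtain ⟨w, i, rfl⟩ := ht
  have e1 : w * σ i * w⁻¹ = w * (σ i * w⁻¹) := by group
  have h := nn_mul cs w (σ i * w⁻¹) (w * σ i * w⁻¹)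
  have h2 := nn_mul cs (σ i) w⁻¹ (w * σ i * w⁻¹)
  have e2 : σ i * w⁻¹ * (w * σ i * w⁻¹) * (σ i * w⁻¹)⁻¹ = σ i := by
    rw [mul_inv_rev, inv_inv, cs.inv_simple]
    simp [mul_assoc, cs.simple_mul_simple_cancel_left]
  have e3 : w⁻¹ * (w * σ i * w⁻¹) * (w⁻¹)⁻¹ = σ i := by
    simp [mul_assoc]
  rw [e2] at h
  rw [e3, nn_simple, if_pos rfl, nn_inv] at h2
  rw [h2] at h
  rw [← e1] at h
  rw [h]
  cases nn cs w (σ i) <;> rfl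

theorem length_lt_of_nn {w t : W} (h : nn cs w t = true) : ℓ (w * t) < ℓ w := by
  obtain ⟨ω, hr, rfl⟩ := cs.exists_reduced_word' w
  have hmem : t ∈ ris ω := by
    by_contra hmem
    have h0 : (ris ω).count t = 0 := List.count_eq_zero.mpr hmem
    rw [nn_wordProd, h0] at h
    simp at h
  obtain ⟨j, hj, hget⟩ := List.getElem_of_mem hmem
  have hj' : j < ω.length := by
    have := cs.length_rightInvSeq ω
    omega
  have hprod : π ω * t = π (ω.eraseIdx j) := by
    have hh := cs.wordProd_mul_getD_rightInvSeq ω j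
    rwa [List.getD_eq_getElem _ _ hj, hget] at hh
  rw [hprod]
  calc ℓ (π (ω.eraseIdx j)) ≤ (ω.eraseIdx j).length := cs.length_wordProd_le _
    _ = ω.length - 1 := by rw [List.length_eraseIdx]; simp [hj']
    _ < ω.length := by omega
    _ = ℓ (π ω) := hr.symm

theorem isRightInversion_iff_nn {w t : W} (ht : cs.IsReflection t) :
    cs.IsRightInversion w t ↔ nn cs w t = true := by
  constructor
  · intro h
    by_contra hn
    have hn' : nn cs w t = false := by simpa using hn
    have e : t * t * t⁻¹ = t := by rw [ht.mul_self, one_mul]; exact ht.inv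
    have h2 : nn cs (w * t) t = true := by
      rw [nn_mul, e, nn_refl_self cs ht, hn']
      rfl
    have h3 := length_lt_of_nn cs h2
    rw [mul_assoc, ht.mul_self, mul_one] at h3
    have := h.2
    omega
  · intro h
    exact ⟨ht, length_lt_of_nn cs h⟩

theorem nn_iff_mem {ω : List B} (hω : cs.IsReduced ω) (t : W) :
    nn cs (π ω) t = true ↔ t ∈ ris ω := by
  rw [nn_wordProd]
  constructor
  · intro h
    by_contra hmem
    rw [List.count_eq_zero.mpr hmem] at h
    simp at h
  · intro h
    rw [List.count_eq_one_of_mem hω.nodup_rightInvSeq h]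
    rfl

end

end CoxAux

open CoxAux in
/-- **Lemma (adjacency of finite biconvex sets).**
Let `cs` be a Coxeter system and `u, v` elements with `ℓ(v) = ℓ(u) + 1`. If every left
inversion of `u` is a left inversion of `v`, then `v = u·sᵢ` for some simple reflection
`sᵢ`. -/
theorem exists_simple_of_leftInversions_subset {B W : Type*} [Group W] {M : CoxeterMatrix B}
    (cs : CoxeterSystem M W) (u v : W) (h1 : cs.length v = cs.length u + 1)
    (h2 : ∀ t : W, cs.IsLeftInversion u t → cs.IsLeftInversion v t) :
    ∃ i : B, v = u * cs.simple i := by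
  classical
  set z := u⁻¹ * v with hz
  -- the hypothesis, in terms of the sign function `nn`
  have key : ∀ t : W, cs.IsReflection t → nn cs u⁻¹ t = true → nn cs v⁻¹ t = true := by
    intro t ht hu
    have hru : cs.IsRightInversion u⁻¹ t := (isRightInversion_iff_nn cs ht).mpr hu
    have hlu : cs.IsLeftInversion u t := (cs.isRightInversion_inv_iff).mp hru
    have hlv : cs.IsLeftInversion v t := h2 t hlu
    exact (isRightInversion_iff_nn cs ht).mp ((cs.isRightInversion_inv_iff).mpr hlv)
  -- every right inversion of z yields an inversion of v⁻¹ that is not one of u⁻¹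
  have main2 : ∀ r : W, cs.IsReflection r → nn cs z r = true →
      nn cs v⁻¹ (v * r * v⁻¹) = true ∧ nn cs u⁻¹ (v * r * v⁻¹) = false := by
    intro r hr hz1
    have hvt : nn cs v⁻¹ (v * r * v⁻¹) = nn cs v r := nn_inv cs v r
    have hcoc : nn cs u⁻¹ (v * r * v⁻¹)
        = Bool.xor (nn cs z r) (nn cs v⁻¹ (v * r * v⁻¹)) := by
      have e : u⁻¹ = z * v⁻¹ := by rw [hz]; group
      have h := nn_mul cs z v⁻¹ (v * r * v⁻¹)
      have e2 : v⁻¹ * (v * r * v⁻¹) * (v⁻¹)⁻¹ = r := by group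
      rw [e2] at h
      rw [e, h]
    rw [hz1] at hcoc
    cases hb : nn cs v⁻¹ (v * r * v⁻¹) with
    | false =>
        exfalso
        rw [hb] at hcoc
        have : nn cs u⁻¹ (v * r * v⁻¹) = true := hcoc
        have := key _ (hr.conj v) this
        rw [hb] at this
        cases this
    | true =>
        refine ⟨rfl, ?_⟩
        rw [hb] at hcoc
        exact hcoc
  -- choose reduced words
  obtain ⟨ωu, hured, hueq⟩ := cs.exists_reduced_word' u⁻¹
  obtain ⟨ωv, hvred, hveq⟩ := cs.exists_reduced_word' v⁻¹
  obtain ⟨ωz, hzred, hzeq⟩ := cs.exists_reduced_word' z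
  -- inversion sets as finsets
  have hsub : (cs.rightInvSeq ωu).toFinset ⊆ (cs.rightInvSeq ωv).toFinset := by
    intro x hx
    rw [List.mem_toFinset] at hx ⊢
    have hnu : nn cs u⁻¹ x = true := by
      rw [hueq]; exact (nn_iff_mem cs hured x).mpr hx
    have hrefl : cs.IsReflection x :=
      cs.isReflection_of_mem_rightInvSeq ωu hx
    have hnv := key x hrefl hnu
    rw [hveq] at hnv
    exact (nn_iff_mem cs hvred x).mp hnv
  have cardAu : (cs.rightInvSeq ωu).toFinset.card = cs.length u := by
    rw [List.toFinset_card_of_nodup hured.nodup_rightInvSeq, cs.length_rightInvSeq, ← hured,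
      ← hueq, cs.length_inv]
  have cardBv : (cs.rightInvSeq ωv).toFinset.card = cs.length u + 1 := by
    rw [List.toFinset_card_of_nodup hvred.nodup_rightInvSeq, cs.length_rightInvSeq, ← hvred,
      ← hveq, cs.length_inv, h1]
  -- the conjugated inversions of z
  have hinj : Function.Injective (fun r : W => v * r * v⁻¹) := by
    intro a b h
    simpa using h
  set C := ((cs.rightInvSeq ωz).toFinset).image (fun r => v * r * v⁻¹) with hC
  have hCsub : C ⊆ (cs.rightInvSeq ωv).toFinset \ (cs.rightInvSeq ωu).toFinset := by
    intro x hx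
    rw [hC, Finset.mem_image] at hx
    obtain ⟨r, hrmem, rfl⟩ := hx
    rw [List.mem_toFinset] at hrmem
    have hrrefl : cs.IsReflection r := cs.isReflection_of_mem_rightInvSeq ωz hrmem
    have hnz : nn cs z r = true := by
      rw [hzeq]; exact (nn_iff_mem cs hzred r).mpr hrmem
    obtain ⟨hv1, hu1⟩ := main2 r hrrefl hnz
    rw [Finset.mem_sdiff, List.mem_toFinset, List.mem_toFinset]
    constructor
    · nth_rewrite 1 [hveq] at hv1
      exact (nn_iff_mem cs hvred _).mp hv1
    · intro hmem
      have : nn cs u⁻¹ (v * r * v⁻¹) = true := by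
        rw [hueq]; exact (nn_iff_mem cs hured _).mpr hmem
      rw [this] at hu1
      cases hu1
  have hCcard : C.card = cs.length z := by
    rw [hC, Finset.card_image_of_injective _ hinj,
      List.toFinset_card_of_nodup hzred.nodup_rightInvSeq, cs.length_rightInvSeq, ← hzred,
      ← hzeq]
  have hzne : z ≠ 1 := by
    intro h
    have : v = u := by
      have := congrArg (fun x => u * x) h
      simpa [hz, mul_assoc] using this
    rw [this] at h1
    omega
  have hlz : 0 < cs.length z := by
    rcases Nat.eq_zero_or_pos (cs.length z) with h | h
    · exact absurd (cs.length_eq_zero_iff.mp h) hzne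
    · exact h
  have hle : cs.length z ≤ 1 := by
    have hcard := Finset.card_le_card hCsub
    rw [hCcard, Finset.card_sdiff_of_subset hsub, cardAu, cardBv] at hcard
    omega
  have : cs.length z = 1 := by omega
  obtain ⟨i, hi⟩ := cs.length_eq_one_iff.mp this
  refine ⟨i, ?_⟩
  rw [← hi, hz]
  group
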